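/- If n ≤ m and G is a graph of order n admitting a local distance antimagic labeling, then χ_ld(G + \overline{K_m}) ≤ χ_ld(G) + 1. -/

import Mathlib

open Finset

open Classical in
/-- The weight of a vertex: sum of labels of its neighbors. -/
noncomputable def ldWeight {V : Type*} (G : SimpleGraph V) [Fintype V] (f : V → ℕ) (v : V) : ℕ :=
  ∑ x ∈ Finset.univ, if G.Adj v x then f x else 0

/-- `f` is a local distance antimagic labeling of `G`: a bijection onto `{1,…,|V|}`
with adjacent vertices getting distinct weights. -/
def IsLDAL {V : Type*} (G : SimpleGraph V) [Fintype V] (f : V → ℕ) : Prop :=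
  Set.BijOn f Set.univ (Set.Icc 1 (Fintype.card V)) ∧
    ∀ ⦃u v : V⦄, G.Adj u v → ldWeight G f u ≠ ldWeight G f v

/-- The local distance antimagic chromatic number: minimum number of distinct weights. -/
noncomputable def chiLD {V : Type*} (G : SimpleGraph V) [Fintype V] : ℕ :=
  sInf {k | ∃ f : V → ℕ, IsLDAL G f ∧ (Finset.univ.image (ldWeight G f)).card = k}

/-- The join `G + H` of two graphs. -/
def graphJoin {α β : Type*} (G : SimpleGraph α) (H : SimpleGraph β) :
    SimpleGraph (α ⊕ β) where
  Adj x y :=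
    match x, y with
    | Sum.inl a, Sum.inl b => G.Adj a b
    | Sum.inr a, Sum.inr b => H.Adj a b
    | Sum.inl _, Sum.inr _ => True
    | Sum.inr _, Sum.inl _ => True
  symm := by
    refine ⟨?_⟩
    rintro (a | a) (b | b) h
    exacts [h.symm, trivial, trivial, h.symm]
  loopless := by
    refine ⟨?_⟩
    rintro (a | a) h
    exacts [G.ne_of_adj h rfl, H.ne_of_adj h rfl]

/-- The lexicographic product `G[H]`. -/
def lexProd {α β : Type*} (G : SimpleGraph α) (H : SimpleGraph β) :
    SimpleGraph (α × β) where
  Adj x y := G.Adj x.1 y.1 ∨ (x.1 = y.1 ∧ H.Adj x.2 y.2)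
  symm := by
    refine ⟨?_⟩
    rintro x y (h | ⟨e, h⟩)
    exacts [Or.inl h.symm, Or.inr ⟨e.symm, h.symm⟩]
  loopless := by
    refine ⟨?_⟩
    rintro x (h | ⟨e, h⟩)
    exacts [G.ne_of_adj h rfl, H.ne_of_adj h rfl]

/-- The friendship graph `F_n`: `n` triangles sharing the central vertex `none`. -/
def friendship (n : ℕ) : SimpleGraph (Option (Fin n × Fin 2)) where
  Adj x y := x ≠ y ∧ (x = none ∨ y = none ∨ ∃ i a b, x = some (i, a) ∧ y = some (i, b))
  symm := by
    refine ⟨?_⟩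
    rintro x y ⟨hne, h⟩
    refine ⟨hne.symm, ?_⟩
    rcases h with h | h | ⟨i, a, b, hx, hy⟩
    · exact Or.inr (Or.inl h)
    · exact Or.inl h
    · exact Or.inr (Or.inr ⟨i, b, a, hy, hx⟩)
  loopless := ⟨fun x h => h.1 rfl⟩

/-- The bistar `B_{n,n}`: two adjacent centers, each with `n` leaves. -/
def bistar (n : ℕ) : SimpleGraph (Bool ⊕ Bool × Fin n) where
  Adj x y :=
    match x, y with
    | Sum.inl a, Sum.inl b => a ≠ b
    | Sum.inl a, Sum.inr (c, _) => a = c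
    | Sum.inr (c, _), Sum.inl a => a = c
    | Sum.inr _, Sum.inr _ => False
  symm := by
    refine ⟨?_⟩
    rintro (a | ⟨c, i⟩) (b | ⟨d, j⟩) h
    exacts [h.symm, h, h, h.elim]
  loopless := by
    refine ⟨?_⟩
    rintro (a | ⟨c, i⟩) h
    exacts [h rfl, h]


open Classical in
lemma ldWeight_join_inl {α : Type*} [Fintype α] (G : SimpleGraph α) (m : ℕ)
    (g : α ⊕ Fin m → ℕ) (a : α) :
    ldWeight (graphJoin G (⊥ : SimpleGraph (Fin m))) g (Sum.inl a)
      = ldWeight G (g ∘ Sum.inl) a + ∑ i : Fin m, g (Sum.inr i) := by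
  unfold ldWeight
  rw [Fintype.sum_sum_type]
  congr 1
  simp [graphJoin]

open Classical in
lemma ldWeight_join_inr {α : Type*} [Fintype α] (G : SimpleGraph α) (m : ℕ)
    (g : α ⊕ Fin m → ℕ) (i : Fin m) :
    ldWeight (graphJoin G (⊥ : SimpleGraph (Fin m))) g (Sum.inr i)
      = ∑ a : α, g (Sum.inl a) := by
  unfold ldWeight
  rw [Fintype.sum_sum_type]
  simp [graphJoin]

theorem stmt_6 {α : Type*} [Fintype α] (G : SimpleGraph α)
    (n m : ℕ) (hn : Fintype.card α = n) (hnm : n ≤ m)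
    (hG : ∃ f, IsLDAL G f) :
    chiLD (graphJoin G (⊥ : SimpleGraph (Fin m))) ≤ chiLD G + 1 := by
  classical
  unfold chiLD
  have hne : {k | ∃ f : α → ℕ, IsLDAL G f ∧ (Finset.univ.image (ldWeight G f)).card = k}.Nonempty := by
    obtain ⟨f, hf⟩ := hG
    exact ⟨_, f, hf, rfl⟩
  obtain ⟨f, hf, hfc⟩ := Nat.sInf_mem hne
  set g : α ⊕ Fin m → ℕ := fun v => match v with
    | Sum.inl a => f a
    | Sum.inr i => n + 1 + i.val with hgdef
  have hgl : g ∘ Sum.inl = f := rfl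
  have hfmem : ∀ a : α, 1 ≤ f a ∧ f a ≤ n := by
    intro a
    have := hf.1.1 (Set.mem_univ a)
    rw [hn] at this
    exact this
  set S : ℕ := ∑ i : Fin m, (n + 1 + i.val) with hSdef
  set T : ℕ := ∑ a : α, f a with hTdef
  have hSval : ∑ i : Fin m, g (Sum.inr i) = S := rfl
  have hTval : ∑ a : α, g (Sum.inl a) = T := rfl
  have hT : T ≤ n * n := by
    calc T ≤ ∑ _a : α, n := Finset.sum_le_sum (fun a _ => (hfmem a).2)
    _ = n * n := by rw [Finset.sum_const, Finset.card_univ, hn, smul_eq_mul]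
  have hS : m * (n + 1) ≤ S := by
    calc m * (n + 1) = ∑ _i : Fin m, (n + 1) := by
          rw [Finset.sum_const, Finset.card_univ, Fintype.card_fin, smul_eq_mul]
    _ ≤ S := Finset.sum_le_sum (fun i _ => Nat.le_add_right _ _)
  have hTS : ∀ _a : α, T < S := by
    intro a
    have hn1 : 1 ≤ n := by
      rw [← hn]
      exact Fintype.card_pos_iff.mpr ⟨a⟩
    have : n * n < n * (n + 1) := by nlinarith
    calc T ≤ n * n := hT
    _ < n * (n + 1) := this
    _ ≤ m * (n + 1) := Nat.mul_le_mul_right _ hnm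
    _ ≤ S := hS
  have hcard : Fintype.card (α ⊕ Fin m) = n + m := by
    rw [Fintype.card_sum, Fintype.card_fin, hn]
  have hIs : IsLDAL (graphJoin G (⊥ : SimpleGraph (Fin m))) g := by
    constructor
    · rw [hcard]
      refine ⟨?_, ?_, ?_⟩
      · rintro (a | i) -
        · obtain ⟨h1, h2⟩ := hfmem a
          simp only [g]
          exact Set.mem_Icc.mpr ⟨h1, by omega⟩
        · have := i.isLt
          simp only [g]
          exact Set.mem_Icc.mpr ⟨by omega, by omega⟩
      · rintro (a | i) - (b | j) - h
        · exact congrArg Sum.inl (hf.1.2.1 trivial trivial h)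
        · have := (hfmem a).2; exfalso; simp only [g] at h; omega
        · have := (hfmem b).2; exfalso; simp only [g] at h; omega
        · simp only [g] at h
          exact congrArg Sum.inr (Fin.ext (by omega))
      · intro k hk
        obtain ⟨hk1, hk2⟩ := Set.mem_Icc.mp hk
        by_cases hkn : k ≤ n
        · obtain ⟨a, -, ha⟩ := hf.1.2.2 (show k ∈ Set.Icc 1 (Fintype.card α) by
            rw [hn]; exact Set.mem_Icc.mpr ⟨hk1, hkn⟩)
          exact ⟨Sum.inl a, Set.mem_univ _, ha⟩
        · refine ⟨Sum.inr ⟨k - (n + 1), by omega⟩, Set.mem_univ _, ?_⟩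
          show n + 1 + (k - (n + 1)) = k
          omega
    · rintro (a | i) (b | j) hadj
      · rw [ldWeight_join_inl, ldWeight_join_inl, hgl, hSval]
        intro h
        exact hf.2 hadj (Nat.add_right_cancel h)
      · rw [ldWeight_join_inl, ldWeight_join_inr, hgl, hSval, hTval]
        have := hTS a
        omega
      · rw [ldWeight_join_inl, ldWeight_join_inr, hgl, hSval, hTval]
        have := hTS b
        omega
      · exact absurd hadj (by simp [graphJoin])
  refine le_trans (Nat.sInf_le ⟨g, hIs, rfl⟩) ?_
  have hsub : Finset.univ.image (ldWeight (graphJoin G (⊥ : SimpleGraph (Fin m))) g)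
      ⊆ (Finset.univ.image (ldWeight G f)).image (· + S) ∪ {T} := by
    intro w hw
    obtain ⟨v, -, rfl⟩ := Finset.mem_image.mp hw
    rcases v with a | i
    · refine Finset.mem_union_left _ ?_
      rw [ldWeight_join_inl, hgl, hSval]
      exact Finset.mem_image.mpr ⟨_, Finset.mem_image.mpr ⟨a, Finset.mem_univ _, rfl⟩, rfl⟩
    · refine Finset.mem_union_right _ ?_
      rw [ldWeight_join_inr, hTval]
      exact Finset.mem_singleton_self _
  calc (Finset.univ.image (ldWeight (graphJoin G (⊥ : SimpleGraph (Fin m))) g)).card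
      ≤ ((Finset.univ.image (ldWeight G f)).image (· + S) ∪ {T}).card :=
        Finset.card_le_card hsub
    _ ≤ ((Finset.univ.image (ldWeight G f)).image (· + S)).card + ({T} : Finset ℕ).card :=
        Finset.card_union_le _ _
    _ ≤ (Finset.univ.image (ldWeight G f)).card + 1 :=
        Nat.add_le_add Finset.card_image_le (by simp)
    _ = chiLD G + 1 := by rw [hfc]; rfl
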